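/- Let f : ℝ^d → ℝ be differentiable, convex, 𝐋-smooth for a nonzero symmetric positive semidefinite matrix 𝐋, and μ-strongly convex with μ > 0, and let x* be its minimizer. Let S be a proper sampling with sketch C, let 0 < γ ≤ 1/λmax(P̄ ∘ 𝐋), and define random iterates by a fixed x^0 ∈ ℝ^d and x^{k+1} = x^k − γ C_k ∇f(x^k), where C_0, C_1, … are independent copies of the sketch C. Then for every k ≥ 0, E[f(x^k)] − f(x*) ≤ (1 − γμ)^k (f(x^0) − f(x*)). -/

import Mathlib

open scoped BigOperators RealInnerProductSpace
open Matrix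

noncomputable section

/-- A proper sampling on `{1,…,d}`: a finitely supported probability distribution over
subsets of `Fin d` whose marginal probabilities are all positive. -/
structure Sampling (d : ℕ) where
  prob : Finset (Fin d) → ℝ
  nonneg : ∀ S, 0 ≤ prob S
  total : ∑ S : Finset (Fin d), prob S = 1
  margPos : ∀ j : Fin d, 0 < ∑ S : Finset (Fin d), if j ∈ S then prob S else 0

namespace Sampling

variable {d : ℕ} (μ : Sampling d)

/-- Marginal probability `p_j = Prob(j ∈ S)`. -/
def marg (j : Fin d) : ℝ := ∑ S : Finset (Fin d), if j ∈ S then μ.prob S else 0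

/-- Probability matrix `P`, with entries `p_{jl} = Prob({j,l} ⊆ S)`. -/
def probMatrix : Matrix (Fin d) (Fin d) ℝ :=
  Matrix.of fun j l => ∑ S : Finset (Fin d), if j ∈ S ∧ l ∈ S then μ.prob S else 0

/-- The matrix `P̄` with entries `p_{jl}/(p_j p_l)`. -/
def Pbar : Matrix (Fin d) (Fin d) ℝ :=
  Matrix.of fun j l => μ.probMatrix j l / (μ.marg j * μ.marg l)

/-- The matrix `P̃ = P̄ − E` where `E` is the all-ones matrix. -/
def Ptilde : Matrix (Fin d) (Fin d) ℝ := μ.Pbar - Matrix.of fun _ _ => (1 : ℝ)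

/-- The unbiased diagonal sketch `C` associated with a realization `S` of the sampling. -/
def sketch (S : Finset (Fin d)) : Matrix (Fin d) (Fin d) ℝ :=
  Matrix.diagonal fun j => if j ∈ S then (μ.marg j)⁻¹ else 0

end Sampling

/-- Largest eigenvalue of a symmetric matrix, via the Rayleigh quotient. -/
def lambdaMax {d : ℕ} (M : Matrix (Fin d) (Fin d) ℝ) : ℝ :=
  sSup {r : ℝ | ∃ v : Fin d → ℝ, v ⬝ᵥ v = 1 ∧ r = v ⬝ᵥ M.mulVec v}

/-- Smallest eigenvalue of a symmetric matrix, via the Rayleigh quotient. -/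
def lambdaMin {d : ℕ} (M : Matrix (Fin d) (Fin d) ℝ) : ℝ :=
  sInf {r : ℝ | ∃ v : Fin d → ℝ, v ⬝ᵥ v = 1 ∧ r = v ⬝ᵥ M.mulVec v}

/-- `Mdag` is the Moore–Penrose pseudoinverse of `M`. -/
def IsMoorePenrose {m n : Type*} [Fintype m] [Fintype n]
    (M : Matrix m n ℝ) (Mdag : Matrix n m ℝ) : Prop :=
  M * Mdag * M = M ∧ Mdag * M * Mdag = Mdag ∧
    (M * Mdag)ᵀ = M * Mdag ∧ (Mdag * M)ᵀ = Mdag * M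

/-- Vectors in `ℝ^d` with the Euclidean inner product. -/
abbrev Vec (d : ℕ) := EuclideanSpace ℝ (Fin d)

/-- Action of a matrix on a Euclidean vector. -/
def mact {d e : ℕ} (M : Matrix (Fin e) (Fin d) ℝ) (x : Vec d) : Vec e :=
  Matrix.toEuclideanLin M x

/-- Quadratic form `xᵀ M x`, i.e. the squared `M`-seminorm `‖x‖²_M`. -/
def quad {d : ℕ} (M : Matrix (Fin d) (Fin d) ℝ) (x : Vec d) : ℝ := ⟪x, mact M x⟫

/-- `f` is `M`-smooth: `f x ≤ f y + ⟨∇f(y), x−y⟩ + ½ (x−y)ᵀ M (x−y)` for all `x, y`. -/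
def MSmooth {d : ℕ} (f : Vec d → ℝ) (M : Matrix (Fin d) (Fin d) ℝ) : Prop :=
  ∀ x y : Vec d, f x ≤ f y + ⟪gradient f y, x - y⟫ + (1 / 2) * quad M (x - y)

/-- Random iterates driven by i.i.d. draws: `traj x0 step k ω` is the `k`-th iterate along
the sample path `ω` of `k` draws. -/
def traj {V Ω : Type*} (x0 : V) (step : V → Ω → V) : ∀ k : ℕ, (Fin k → Ω) → V
  | 0, _ => x0
  | k + 1, ω => step (traj x0 step k fun i => ω i.castSucc) (ω (Fin.last k))

/-- Expectation `E[φ(x^k)]` of a functional of the `k`-th iterate, over `k` i.i.d. draws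
with one-step distribution `P`. -/
def trajExp {V Ω : Type*} [Fintype Ω] (P : Ω → ℝ) (x0 : V) (step : V → Ω → V)
    (φ : V → ℝ) (k : ℕ) : ℝ :=
  ∑ ω : Fin k → Ω, (∏ i, P (ω i)) * φ (traj x0 step k ω)


section SkGDHelpers

variable {d : ℕ}

lemma mact_apply (M : Matrix (Fin d) (Fin d) ℝ) (x : Vec d) (j : Fin d) :
    mact M x j = ∑ l, M j l * x l := rfl

lemma quad_eq (M : Matrix (Fin d) (Fin d) ℝ) (x : Vec d) :
    quad M x = ∑ j, ∑ l, x j * (M j l * x l) := by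
  simp only [quad, PiLp.inner_apply, RCLike.inner_apply, conj_trivial, mact_apply,
    Finset.mul_sum]
  exact Finset.sum_congr rfl fun j _ => by
    rw [Finset.sum_mul]; exact Finset.sum_congr rfl fun l _ => by ring

lemma quad_smul (M : Matrix (Fin d) (Fin d) ℝ) (c : ℝ) (x : Vec d) :
    quad M (c • x) = c ^ 2 * quad M x := by
  simp only [quad_eq, PiLp.smul_apply, smul_eq_mul, Finset.mul_sum]
  exact Finset.sum_congr rfl fun j _ => Finset.sum_congr rfl fun l _ => by ring

lemma quad_eq_dot (M : Matrix (Fin d) (Fin d) ℝ) (x : Vec d) :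
    quad M x = (fun j => x j) ⬝ᵥ M.mulVec (fun j => x j) := by
  simp [quad_eq, dotProduct, Matrix.mulVec, Finset.mul_sum]

lemma norm_sq_eq (y : Vec d) : ‖y‖ ^ 2 = ∑ j, y j ^ 2 := by
  rw [← real_inner_self_eq_norm_sq]
  simp only [PiLp.inner_apply, RCLike.inner_apply, conj_trivial, sq]

lemma rayleighSet_bddAbove (M : Matrix (Fin d) (Fin d) ℝ) :
    BddAbove {r : ℝ | ∃ v : Fin d → ℝ, v ⬝ᵥ v = 1 ∧ r = v ⬝ᵥ M.mulVec v} := by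
  refine ⟨∑ j, ∑ l, |M j l|, ?_⟩
  rintro r ⟨v, hv, rfl⟩
  have hvj : ∀ j, |v j| ≤ 1 := by
    intro j
    have h1 : v j * v j ≤ 1 := by
      rw [← hv]
      exact Finset.single_le_sum (f := fun i => v i * v i)
        (fun i _ => mul_self_nonneg _) (Finset.mem_univ j)
    nlinarith [abs_nonneg (v j), abs_mul_abs_self (v j)]
  calc v ⬝ᵥ M.mulVec v = ∑ j, ∑ l, v j * (M j l * v l) := by
        simp [dotProduct, Matrix.mulVec, Finset.mul_sum]
    _ ≤ ∑ j, ∑ l, |M j l| := by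
        refine Finset.sum_le_sum fun j _ => Finset.sum_le_sum fun l _ => ?_
        calc v j * (M j l * v l) ≤ |v j * (M j l * v l)| := le_abs_self _
          _ = |v j| * |M j l| * |v l| := by rw [abs_mul, abs_mul]; ring
          _ ≤ 1 * |M j l| * 1 :=
              mul_le_mul (mul_le_mul_of_nonneg_right (hvj j) (abs_nonneg _)) (hvj l)
                (abs_nonneg _) (by positivity)
          _ = |M j l| := by ring

lemma le_lambdaMax (M : Matrix (Fin d) (Fin d) ℝ) (v : Fin d → ℝ) (hv : v ⬝ᵥ v = 1) :
    v ⬝ᵥ M.mulVec v ≤ lambdaMax M :=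
  le_csSup (rayleighSet_bddAbove M) ⟨v, hv, rfl⟩

lemma quad_le_lambdaMax (M : Matrix (Fin d) (Fin d) ℝ) (x : Vec d) :
    quad M x ≤ lambdaMax M * ∑ j, x j ^ 2 := by
  have hs0 : (0:ℝ) ≤ ∑ j, x j ^ 2 := Finset.sum_nonneg fun j _ => sq_nonneg _
  rcases eq_or_lt_of_le hs0 with h | h
  · have hx : ∀ j ∈ Finset.univ, x j ^ 2 = 0 :=
      (Finset.sum_eq_zero_iff_of_nonneg (fun i _ => sq_nonneg (x i))).1 h.symm
    have hx' : ∀ j : Fin d, x j = 0 := fun j =>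
      (pow_eq_zero_iff two_ne_zero).1 (hx j (Finset.mem_univ j))
    rw [quad_eq, ← h]
    simp [hx']
  · set s := ∑ j, x j ^ 2 with hs
    set t := Real.sqrt s with htdef
    have ht : t ^ 2 = s := Real.sq_sqrt h.le
    have ht0 : 0 < t := Real.sqrt_pos.2 h
    have htne : t ≠ 0 := ht0.ne'
    set v : Fin d → ℝ := fun j => x j / t with hv
    have hv1 : v ⬝ᵥ v = 1 := by
      have : v ⬝ᵥ v = (∑ j, x j ^ 2) / (t * t) := by
        simp only [dotProduct, hv, div_mul_div_comm, ← Finset.sum_div, sq]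
      rw [this, ← hs, show t * t = s by rw [← sq]; exact ht, div_self h.ne']
    have hvq : quad M x = s * (v ⬝ᵥ M.mulVec v) := by
      rw [quad_eq]
      simp only [dotProduct, Matrix.mulVec, Finset.mul_sum]
      refine Finset.sum_congr rfl fun j _ => Finset.sum_congr rfl fun l _ => ?_
      simp only [hv]
      rw [show s = t ^ 2 from ht.symm]
      field_simp
    have hle := le_lambdaMax M v hv1
    calc quad M x = s * (v ⬝ᵥ M.mulVec v) := hvq
      _ ≤ s * lambdaMax M := mul_le_mul_of_nonneg_left hle h.le
      _ = lambdaMax M * s := mul_comm _ _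

/-- sketch coefficient -/
def skc (μs : Sampling d) (S : Finset (Fin d)) (j : Fin d) : ℝ :=
  if j ∈ S then (μs.marg j)⁻¹ else 0

variable (μs : Sampling d)

lemma mact_sketch (S : Finset (Fin d)) (y : Vec d) (j : Fin d) :
    mact (μs.sketch S) y j = skc μs S j * y j := by
  simp [mact_apply, Sampling.sketch, Matrix.diagonal_apply, ite_mul, skc,
    Finset.sum_ite_eq, eq_comm]

lemma exp_skc (j : Fin d) : ∑ S : Finset (Fin d), μs.prob S * skc μs S j = 1 := by
  have h : ∀ S : Finset (Fin d), μs.prob S * skc μs S j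
      = (if j ∈ S then μs.prob S else 0) * (μs.marg j)⁻¹ := by
    intro S; by_cases hS : j ∈ S <;> simp [skc, hS]
  rw [Finset.sum_congr rfl fun S _ => h S, ← Finset.sum_mul]
  exact mul_inv_cancel₀ (μs.margPos j).ne'

lemma exp_skc2 (j l : Fin d) :
    ∑ S : Finset (Fin d), μs.prob S * (skc μs S j * skc μs S l) = μs.Pbar j l := by
  have h : ∀ S : Finset (Fin d), μs.prob S * (skc μs S j * skc μs S l)
      = (if j ∈ S ∧ l ∈ S then μs.prob S else 0) * ((μs.marg j)⁻¹ * (μs.marg l)⁻¹) := by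
    intro S; by_cases h1 : j ∈ S <;> by_cases h2 : l ∈ S <;> simp [skc, h1, h2]
  rw [Finset.sum_congr rfl fun S _ => h S, ← Finset.sum_mul]
  simp only [Sampling.Pbar, Sampling.probMatrix, Matrix.of_apply, div_eq_mul_inv, mul_inv]

lemma exp_inner (g : Vec d) :
    ∑ S : Finset (Fin d), μs.prob S * ⟪g, mact (μs.sketch S) g⟫ = ∑ j, g j ^ 2 := by
  have hterm : ∀ S : Finset (Fin d),
      ⟪g, mact (μs.sketch S) g⟫ = ∑ j, skc μs S j * (g j * g j) := by
    intro S
    simp only [PiLp.inner_apply, RCLike.inner_apply, conj_trivial, mact_sketch]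
    exact Finset.sum_congr rfl fun j _ => by ring
  simp only [hterm, Finset.mul_sum]
  rw [Finset.sum_comm]
  refine Finset.sum_congr rfl fun j _ => ?_
  have : ∑ S : Finset (Fin d), μs.prob S * (skc μs S j * (g j * g j))
      = (∑ S : Finset (Fin d), μs.prob S * skc μs S j) * (g j * g j) := by
    rw [Finset.sum_mul]; exact Finset.sum_congr rfl fun S _ => by ring
  rw [this, exp_skc, one_mul, sq]

lemma exp_quad (L : Matrix (Fin d) (Fin d) ℝ) (g : Vec d) :
    ∑ S : Finset (Fin d), μs.prob S * quad L (mact (μs.sketch S) g)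
      = quad (Matrix.hadamard μs.Pbar L) g := by
  have hterm : ∀ S : Finset (Fin d), quad L (mact (μs.sketch S) g)
      = ∑ j, ∑ l, (skc μs S j * skc μs S l) * (g j * (L j l * g l)) := by
    intro S
    rw [quad_eq]
    refine Finset.sum_congr rfl fun j _ => Finset.sum_congr rfl fun l _ => ?_
    rw [mact_sketch, mact_sketch]; ring
  simp only [hterm, Finset.mul_sum]
  rw [Finset.sum_comm]
  refine Eq.trans (Finset.sum_congr rfl fun j _ => Finset.sum_comm) ?_
  rw [quad_eq]
  refine Finset.sum_congr rfl fun j _ => Finset.sum_congr rfl fun l _ => ?_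
  have : ∑ S : Finset (Fin d), μs.prob S * ((skc μs S j * skc μs S l) * (g j * (L j l * g l)))
      = (∑ S : Finset (Fin d), μs.prob S * (skc μs S j * skc μs S l)) * (g j * (L j l * g l)) := by
    rw [Finset.sum_mul]; exact Finset.sum_congr rfl fun S _ => by ring
  rw [this, exp_skc2, Matrix.hadamard_apply]; ring

lemma quad_le_hadamard {L : Matrix (Fin d) (Fin d) ℝ} (hL : L.PosSemidef) (g : Vec d) :
    quad L g ≤ quad (Matrix.hadamard μs.Pbar L) g := by
  set w : Finset (Fin d) → Fin d → ℝ := fun S j => (skc μs S j - 1) * g j with hw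
  have key : quad (Matrix.hadamard μs.Pbar L) g - quad L g
      = ∑ S : Finset (Fin d), μs.prob S * (w S ⬝ᵥ L.mulVec (w S)) := by
    have hterm : ∀ S : Finset (Fin d), μs.prob S * (w S ⬝ᵥ L.mulVec (w S))
        = ∑ j, ∑ l, (μs.prob S * (skc μs S j * skc μs S l)
            - μs.prob S * skc μs S j - μs.prob S * skc μs S l + μs.prob S)
            * (g j * (L j l * g l)) := by
      intro S
      simp only [dotProduct, Matrix.mulVec, Finset.mul_sum]
      refine Finset.sum_congr rfl fun j _ => Finset.sum_congr rfl fun l _ => ?_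
      simp only [hw]; ring
    simp only [hterm]
    rw [Finset.sum_comm]
    refine Eq.trans ?_ (Finset.sum_congr rfl fun j _ => Finset.sum_comm).symm
    rw [quad_eq, quad_eq, ← Finset.sum_sub_distrib]
    refine Finset.sum_congr rfl fun j _ => ?_
    rw [← Finset.sum_sub_distrib]
    refine Finset.sum_congr rfl fun l _ => ?_
    have hdist : ∑ S : Finset (Fin d),
        (μs.prob S * (skc μs S j * skc μs S l)
            - μs.prob S * skc μs S j - μs.prob S * skc μs S l + μs.prob S)
            * (g j * (L j l * g l))
        = ((∑ S : Finset (Fin d), μs.prob S * (skc μs S j * skc μs S l))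
            - (∑ S : Finset (Fin d), μs.prob S * skc μs S j)
            - (∑ S : Finset (Fin d), μs.prob S * skc μs S l)
            + (∑ S : Finset (Fin d), μs.prob S)) * (g j * (L j l * g l)) := by
      simp only [sub_mul, add_mul, Finset.sum_mul]
      rw [← Finset.sum_sub_distrib, ← Finset.sum_sub_distrib, ← Finset.sum_add_distrib]
    rw [hdist, exp_skc2, exp_skc, exp_skc, μs.total]
    rw [Matrix.hadamard_apply]; ring
  have hnn : 0 ≤ ∑ S : Finset (Fin d), μs.prob S * (w S ⬝ᵥ L.mulVec (w S)) := by
    refine Finset.sum_nonneg fun S _ => mul_nonneg (μs.nonneg S) ?_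
    simpa using hL.dotProduct_mulVec_nonneg (w S)
  linarith [key ▸ hnn]

lemma exp_affine {Ω : Type*} [Fintype Ω] (W φ : Ω → ℝ) (A B : ℝ) :
    ∑ ω : Ω, W ω * (A + B * (φ ω - A))
      = A * (∑ ω : Ω, W ω) + B * ((∑ ω : Ω, W ω * φ ω) - A * (∑ ω : Ω, W ω)) := by
  have h : ∀ ω : Ω, W ω * (A + B * (φ ω - A))
      = A * W ω + B * (W ω * φ ω) - B * (A * W ω) := fun ω => by ring
  rw [Finset.sum_congr rfl fun ω _ => h ω, Finset.sum_sub_distrib, Finset.sum_add_distrib]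
  simp only [← Finset.mul_sum]
  ring

lemma sum_prod_eq_one {Ω : Type*} [Fintype Ω] (P : Ω → ℝ) (h : ∑ s, P s = 1) :
    ∀ k : ℕ, ∑ ω : Fin k → Ω, ∏ i, P (ω i) = 1
  | 0 => by simp
  | (k+1) => by
    rw [← Equiv.sum_comp (Fin.snocEquiv fun _ => Ω) (fun ω => ∏ i, P (ω i)),
      Fintype.sum_prod_type]
    simp only [Fin.snocEquiv_apply, Fin.prod_univ_castSucc, Fin.snoc_castSucc, Fin.snoc_last]
    calc ∑ x : Ω, ∑ ω : Fin k → Ω, (∏ i, P (ω i)) * P x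
        = ∑ x : Ω, (∑ ω : Fin k → Ω, ∏ i, P (ω i)) * P x := by
          refine Finset.sum_congr rfl fun x _ => ?_
          rw [Finset.sum_mul]
      _ = ∑ x : Ω, P x := by
          simp only [sum_prod_eq_one P h k, one_mul]
      _ = 1 := h

lemma trajExp_succ {V Ω : Type*} [Fintype Ω] (P : Ω → ℝ) (x0 : V) (step : V → Ω → V)
    (φ : V → ℝ) (k : ℕ) :
    trajExp P x0 step φ (k + 1)
      = ∑ ω : Fin k → Ω, (∏ i, P (ω i)) * ∑ s : Ω, P s * φ (step (traj x0 step k ω) s) := by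
  rw [trajExp,
    ← Equiv.sum_comp (Fin.snocEquiv fun _ => Ω)
      (fun ω => (∏ i, P (ω i)) * φ (traj x0 step (k + 1) ω)),
    Fintype.sum_prod_type]
  simp only [Fin.snocEquiv_apply, traj, Fin.snoc_castSucc, Fin.snoc_last,
    Fin.prod_univ_castSucc]
  rw [Finset.sum_comm]
  refine Finset.sum_congr rfl fun ω _ => ?_
  rw [Finset.mul_sum]
  exact Finset.sum_congr rfl fun s _ => by ring

end SkGDHelpers


/-- SkGD convergence. For `f` differentiable, convex, `𝐋`-smooth (`𝐋 ≠ 0` PSD)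
and `μ`-strongly convex with minimizer `x*`, step size `0 < γ ≤ 1/λmax(P̄ ∘ 𝐋)`, and iterates
`x^{k+1} = x^k − γ C_k ∇f(x^k)` with i.i.d. sketches, one has
`E[f(x^k)] − f(x*) ≤ (1 − γμ)^k (f(x^0) − f(x*))`. -/
theorem statement5 {d : ℕ} (μsamp : Sampling d) (f : Vec d → ℝ)
    (LL : Matrix (Fin d) (Fin d) ℝ) (hLL : LL.PosSemidef) (hLL0 : LL ≠ 0)
    (hdiff : Differentiable ℝ f) (hconv : ConvexOn ℝ Set.univ f)
    (hsmooth : MSmooth f LL) (mu : ℝ) (hmu : 0 < mu)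
    (hsc : ∀ x y : Vec d, f y + ⟪gradient f y, x - y⟫ + mu / 2 * ‖x - y‖ ^ 2 ≤ f x)
    (xstar : Vec d) (hmin : ∀ x, f xstar ≤ f x)
    (γ : ℝ) (hγ : 0 < γ) (hγ' : γ ≤ 1 / lambdaMax (Matrix.hadamard μsamp.Pbar LL))
    (x0 : Vec d) :
    ∀ k : ℕ,
      trajExp μsamp.prob x0 (fun x S => x - γ • mact (μsamp.sketch S) (gradient f x)) f k
          - f xstar
        ≤ (1 - γ * mu) ^ k * (f x0 - f xstar) := by
  rcases Nat.eq_zero_or_pos d with hd | hd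
  · subst hd
    haveI hsub : Subsingleton (Vec 0) := ⟨fun a b => by ext i; exact i.elim0⟩
    intro k
    have hw := sum_prod_eq_one μsamp.prob μsamp.total k
    have htr : ∀ ω : Fin k → Finset (Fin 0),
        traj x0 (fun x S => x - γ • mact (μsamp.sketch S) (gradient f x)) k ω = x0 :=
      fun ω => Subsingleton.elim _ _
    have hT : trajExp μsamp.prob x0
        (fun x S => x - γ • mact (μsamp.sketch S) (gradient f x)) f k = f x0 := by
      unfold trajExp
      simp only [htr]
      rw [← Finset.sum_mul, hw, one_mul]
    rw [hT, Subsingleton.elim x0 xstar]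
    simp
  · obtain ⟨j0⟩ : Nonempty (Fin d) := ⟨⟨0, hd⟩⟩
    have muL : ∀ u : Vec d, mu * ‖u‖ ^ 2 ≤ quad LL u := by
      intro u
      have h1 := hsc u 0
      have h2 := hsmooth u 0
      rw [sub_zero] at h1 h2
      linarith
    set u : Vec d := EuclideanSpace.single j0 (1:ℝ) with hudef
    have hu : (∑ j, u j ^ 2) = 1 := by
      simp [hudef, EuclideanSpace.single_apply, apply_ite (fun r : ℝ => r ^ 2)]
    have hnu : ‖u‖ ^ 2 = 1 := by rw [norm_sq_eq]; exact hu
    have hv1 : (fun j => u j) ⬝ᵥ (fun j => u j) = 1 := by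
      simpa [dotProduct, pow_two] using hu
    have hmulam : mu ≤ lambdaMax (Matrix.hadamard μsamp.Pbar LL) := by
      calc mu = mu * ‖u‖ ^ 2 := by rw [hnu, mul_one]
        _ ≤ quad LL u := muL u
        _ ≤ quad (Matrix.hadamard μsamp.Pbar LL) u := quad_le_hadamard μsamp hLL u
        _ = (fun j => u j) ⬝ᵥ (Matrix.hadamard μsamp.Pbar LL).mulVec (fun j => u j) :=
            quad_eq_dot _ u
        _ ≤ lambdaMax (Matrix.hadamard μsamp.Pbar LL) := le_lambdaMax _ _ hv1
    have hlampos : 0 < lambdaMax (Matrix.hadamard μsamp.Pbar LL) := lt_of_lt_of_le hmu hmulam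
    have hgl : γ * lambdaMax (Matrix.hadamard μsamp.Pbar LL) ≤ 1 := (le_div_iff₀ hlampos).1 hγ'
    have hgmu : γ * mu ≤ 1 := le_trans (mul_le_mul_of_nonneg_left hmulam hγ.le) hgl
    have hlaminv : lambdaMax (Matrix.hadamard μsamp.Pbar LL) ≤ 1 / γ :=
      (le_div_iff₀ hγ).2
        (by linarith [mul_comm γ (lambdaMax (Matrix.hadamard μsamp.Pbar LL))])
    have grad_lb : ∀ x : Vec d, 2 * mu * (f x - f xstar) ≤ ‖gradient f x‖ ^ 2 := by
      intro x
      have h := hsc xstar x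
      have h2 := abs_real_inner_le_norm (gradient f x) (xstar - x)
      have h3 := neg_abs_le (⟪gradient f x, xstar - x⟫ : ℝ)
      nlinarith [sq_nonneg (‖gradient f x‖ - mu * ‖xstar - x‖), hmu, sq_nonneg ‖xstar - x‖]
    have key : ∀ x : Vec d,
        ∑ S : Finset (Fin d), μsamp.prob S * f (x - γ • mact (μsamp.sketch S) (gradient f x))
          ≤ f xstar + (1 - γ * mu) * (f x - f xstar) := by
      intro x
      set g : Vec d := gradient f x with hg
      have hsm : ∀ S : Finset (Fin d),
          f (x - γ • mact (μsamp.sketch S) g)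
            ≤ f x - γ * ⟪g, mact (μsamp.sketch S) g⟫
              + γ ^ 2 / 2 * quad LL (mact (μsamp.sketch S) g) := by
        intro S
        have h := hsmooth (x - γ • mact (μsamp.sketch S) g) x
        have hx : x - γ • mact (μsamp.sketch S) g - x = (-γ) • mact (μsamp.sketch S) g := by
          rw [sub_sub_cancel_left, neg_smul]
        rw [hx, quad_smul, real_inner_smul_right, neg_sq, ← hg] at h
        linarith
      have hsum1 : ∑ S : Finset (Fin d), μsamp.prob S * f (x - γ • mact (μsamp.sketch S) g)
          ≤ ∑ S : Finset (Fin d), μsamp.prob S *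
              (f x - γ * ⟪g, mact (μsamp.sketch S) g⟫
                + γ ^ 2 / 2 * quad LL (mact (μsamp.sketch S) g)) :=
        Finset.sum_le_sum fun S _ => mul_le_mul_of_nonneg_left (hsm S) (μsamp.nonneg S)
      have hsum2 : ∑ S : Finset (Fin d), μsamp.prob S *
              (f x - γ * ⟪g, mact (μsamp.sketch S) g⟫
                + γ ^ 2 / 2 * quad LL (mact (μsamp.sketch S) g))
          = f x - γ * (∑ j, g j ^ 2)
            + γ ^ 2 / 2 * quad (Matrix.hadamard μsamp.Pbar LL) g := by
        have hsplit : ∀ S : Finset (Fin d), μsamp.prob S *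
              (f x - γ * ⟪g, mact (μsamp.sketch S) g⟫
                + γ ^ 2 / 2 * quad LL (mact (μsamp.sketch S) g))
            = μsamp.prob S * f x - γ * (μsamp.prob S * ⟪g, mact (μsamp.sketch S) g⟫)
              + γ ^ 2 / 2 * (μsamp.prob S * quad LL (mact (μsamp.sketch S) g)) := fun S => by
          ring
        rw [Finset.sum_congr rfl fun S _ => hsplit S, Finset.sum_add_distrib,
          Finset.sum_sub_distrib, ← Finset.sum_mul, ← Finset.mul_sum, ← Finset.mul_sum,
          μsamp.total, exp_inner, exp_quad, one_mul]
      have hquad : quad (Matrix.hadamard μsamp.Pbar LL) g ≤ 1 / γ * ∑ j, g j ^ 2 :=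
        le_trans (quad_le_lambdaMax _ g)
          (mul_le_mul_of_nonneg_right hlaminv (Finset.sum_nonneg fun j _ => sq_nonneg _))
      have hGN : ‖g‖ ^ 2 = ∑ j, g j ^ 2 := norm_sq_eq g
      have hGb : 2 * mu * (f x - f xstar) ≤ ‖g‖ ^ 2 := grad_lb x
      have hfield : γ ^ 2 / 2 * (1 / γ * ∑ j, g j ^ 2) = γ / 2 * ∑ j, g j ^ 2 := by
        field_simp
      have hq2 : γ ^ 2 / 2 * quad (Matrix.hadamard μsamp.Pbar LL) g
          ≤ γ / 2 * ∑ j, g j ^ 2 := by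
        calc γ ^ 2 / 2 * quad (Matrix.hadamard μsamp.Pbar LL) g
            ≤ γ ^ 2 / 2 * (1 / γ * ∑ j, g j ^ 2) :=
              mul_le_mul_of_nonneg_left hquad (by positivity)
          _ = γ / 2 * ∑ j, g j ^ 2 := hfield
      have hmul : γ / 2 * (2 * mu * (f x - f xstar)) ≤ γ / 2 * ∑ j, g j ^ 2 :=
        mul_le_mul_of_nonneg_left (by linarith) (by positivity)
      calc ∑ S : Finset (Fin d), μsamp.prob S * f (x - γ • mact (μsamp.sketch S) g)
          ≤ ∑ S : Finset (Fin d), μsamp.prob S *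
              (f x - γ * ⟪g, mact (μsamp.sketch S) g⟫
                + γ ^ 2 / 2 * quad LL (mact (μsamp.sketch S) g)) := hsum1
        _ = f x - γ * (∑ j, g j ^ 2)
            + γ ^ 2 / 2 * quad (Matrix.hadamard μsamp.Pbar LL) g := hsum2
        _ ≤ f xstar + (1 - γ * mu) * (f x - f xstar) := by nlinarith [hq2, hmul, hγ]
    intro k
    induction k with
    | zero => simp [trajExp, traj]
    | succ k ih =>
      have h1γ : (0:ℝ) ≤ 1 - γ * mu := by linarith
      have hstep : trajExp μsamp.prob x0
            (fun x S => x - γ • mact (μsamp.sketch S) (gradient f x)) f (k + 1)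
          ≤ f xstar + (1 - γ * mu) *
            (trajExp μsamp.prob x0
              (fun x S => x - γ • mact (μsamp.sketch S) (gradient f x)) f k - f xstar) := by
        rw [trajExp_succ]
        refine le_trans (Finset.sum_le_sum (fun (ω : Fin k → Finset (Fin d)) _ =>
          mul_le_mul_of_nonneg_left
            (key (traj x0 (fun x S => x - γ • mact (μsamp.sketch S) (gradient f x)) k ω))
            (Finset.prod_nonneg fun i _ => μsamp.nonneg _))) ?_
        have he := exp_affine (fun ω : Fin k → Finset (Fin d) => ∏ i, μsamp.prob (ω i))
          (fun ω : Fin k → Finset (Fin d) =>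
            f (traj x0 (fun x S => x - γ • mact (μsamp.sketch S) (gradient f x)) k ω))
          (f xstar) (1 - γ * mu)
        rw [sum_prod_eq_one μsamp.prob μsamp.total k] at he
        simp only [mul_one] at he
        rw [he]
        simp only [trajExp]
        exact le_rfl
      have h2 := mul_le_mul_of_nonneg_left ih h1γ
      rw [pow_succ]
      linarith [hstep, h2]
end
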